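/- arXiv:2505.06309 — 2 statements merged into one kernel-verified Lean document; each statement's English description precedes it below -/
import Mathlib

section
/- The pentagon relation for shear coordinates: define the map g on pairs of positive real numbers by g(x, y) = (y(1+x), 1/x), which describes how the shear coordinates of the two diagonals of a pentagon transform under a single flip. Then the fifth iterate of g is the identity: g(g(g(g(g(x, y))))) = (x, y) for all positive reals x, y. -/
/-- The shear-coordinate pentagon map `g(x, y) = (y(1+x), 1/x)`. -/
noncomputable def shearPentagonMap : ℝ × ℝ → ℝ × ℝ :=
  fun (x, y) => (y * (1 + x), 1 / x)

/-- The pentagon relation for shear coordinates: the fifth iterate of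
`g(x, y) = (y(1+x), 1/x)` is the identity on pairs of positive reals. -/
theorem shear_pentagon (x y : ℝ) (hx : 0 < x) (hy : 0 < y) :
    shearPentagonMap (shearPentagonMap (shearPentagonMap (shearPentagonMap
      (shearPentagonMap (x, y))))) = (x, y) := by
  have hx' : x ≠ 0 := hx.ne'
  have hy' : y ≠ 0 := hy.ne'
  have h1 : y * (1 + x) ≠ 0 := by positivity
  have h2 : (1 / x) * (1 + y * (1 + x)) ≠ 0 := by positivity
  simp only [shearPentagonMap, Prod.mk.injEq]
  constructor <;> field_simp <;> ring
end

section
/- The pentagon relation for Ptolemy transformations with boundary labels: let e₁₂, e₂₃, e₃₄, e₄₅, e₅₁ (the labels of the five boundary edges of a pentagon with vertices 1,2,3,4,5) and d₁, d₂ (the labels of the initial diagonals 13 and 14) be positive real numbers. Define successively d₃ = (e₁₂·e₃₄ + e₂₃·d₂)/d₁ (the label of diagonal 24), d₄ = (e₁₂·e₄₅ + e₅₁·d₃)/d₂ (diagonal 25), d₅ = (e₂₃·e₄₅ + e₃₄·d₄)/d₃ (diagonal 35), d₆ = (e₁₂·d₅ + e₂₃·e₅₁)/d₄ (diagonal 13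 again), and d₇ = (e₃₄·e₅₁ + e₄₅·d₆)/d₅ (diagonal 14 again). Then d₆ = d₁ and d₇ = d₂; that is, the sequence of five Ptolemy flips carrying the triangulation of the pentagon around a full cycle returns every diagonal label to its original value. -/
/-- The pentagon relation for Ptolemy transformations with boundary labels:
five successive Ptolemy flips carry the triangulation of a pentagon around a
full cycle and return both diagonal labels to their original values. -/
theorem ptolemy_pentagon_with_boundary
    (e12 e23 e34 e45 e51 d1 d2 : ℝ)
    (h12 : 0 < e12) (h23 : 0 < e23) (h34 : 0 < e34) (h45 : 0 < e45) (h51 : 0 < e51)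
    (hd1 : 0 < d1) (hd2 : 0 < d2)
    (d3 d4 d5 d6 d7 : ℝ)
    (h3 : d3 = (e12 * e34 + e23 * d2) / d1)
    (h4 : d4 = (e12 * e45 + e51 * d3) / d2)
    (h5 : d5 = (e23 * e45 + e34 * d4) / d3)
    (h6 : d6 = (e12 * d5 + e23 * e51) / d4)
    (h7 : d7 = (e34 * e51 + e45 * d6) / d5) :
    d6 = d1 ∧ d7 = d2 := by
  have hd3 : 0 < d3 := by rw [h3]; positivity
  have hd4 : 0 < d4 := by rw [h4]; positivity
  have hd5 : 0 < d5 := by rw [h5]; positivity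
  subst h7 h6 h5 h4 h3
  constructor <;> (field_simp; ring)
end
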